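/- Let A = (V, μ, η, α) be a unital hom-associative algebra over a field K with unit e₂ = η(1) satisfying α(e₂) = e₂, and suppose W is a linear complement of K·e₂ in V (so V = K·e₂ ⊕ W) with α(W) ⊆ W and μ(w, w') ∈ W for all w, w' ∈ W. Form Ṽ = K·e₁ ⊕ V (adjoining a new element e₁) and define: μ₂(e₁, u) = μ₂(u, e₁) = u for all u ∈ Ṽ and μ₂(x, y) = μ(x, y) for x, y ∈ V; η₂(1) = e₁; Δ₂(e₁) = e₁⊗e₁, Δ₂(e₂) = e₂⊗e₁ + e₁⊗e₂ − e₂⊗e₂, and Δ₂(w) = (e₁ − e₂)⊗α(w) + α(w)⊗(e₁ − e₂) for w ∈ W; ε₂(e₁) = 1 and ε₂(x) = 0 for x ∈ V; α₂(e₁) = e₁, α₂(e₂) = e₂, and α₂(x) = α(x) for x ∈ V (all extended linearly). Then: (a) (α₂⊗α₂)∘Δ₂ = Δ₂∘α₂; (b) (α₂⊗Δ₂)∘Δ₂ = (Δ₂⊗α₂)∘Δ₂; (c) (ε₂⊗α₂)(Δ₂(u)) = (α₂⊗ε₂)(Δ₂(u)) = α₂(α₂(u)) for all u ∈ Ṽ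 (identifying K⊗Ṽ and Ṽ⊗K with Ṽ); (d) Δ₂(μ₂(u,v)) = Δ₂(u)•Δ₂(v) for all u, v ∈ Ṽ, where (a⊗b)•(c⊗d) = μ₂(a,c)⊗μ₂(b,d); (e) ε₂(μ₂(u,v)) = ε₂(u)ε₂(v) for all u, v ∈ Ṽ; and (f) ε₂∘α₂ = ε₂. In particular, K₂(A) = (Ṽ, μ₂, η₂, Δ₂, ε₂, α₂) carries the second Kaplansky hom-bialgebra structure. -/
import Mathlib


open TensorProduct

namespace Stmt5

variable {K V : Type*} [Field K] [AddCommGroup V] [Module K V]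

/-- The extended space `Ṽ = K·e₁ ⊕ V`, realized as `K × V`, with `e₁ = (1,0)`
and `V` embedded via `x ↦ (0,x)`. -/
abbrev Vt (K V : Type*) := K × V

/-- The embedding `V → Ṽ`. -/
def iota : V →ₗ[K] Vt K V := LinearMap.inr K K V

/-- The adjoined unit `e₁ ∈ Ṽ`. -/
def e₁ : Vt K V := (1, 0)

/-- The Kaplansky multiplication `μ₂` on `Ṽ`: `e₁` is a two-sided unit and
`μ₂` restricts to `μ` on `V`. -/
def mu₂ (μ : V →ₗ[K] V →ₗ[K] V) : Vt K V →ₗ[K] Vt K V →ₗ[K] Vt K V :=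
  LinearMap.mk₂ K
    (fun p q => (p.1 * q.1, p.1 • q.2 + q.1 • p.2 + μ p.2 q.2))
    (by intro p p' q; ext <;>
      simp [add_mul, add_smul, smul_add, map_add] <;> abel)
    (by intro c p q; ext <;>
      simp [mul_assoc, mul_smul, smul_add, smul_comm q.1 c, map_smul])
    (by intro p q q'; ext <;>
      simp [mul_add, add_smul, smul_add, map_add] <;> abel)
    (by intro c p q; ext <;>
      simp [mul_left_comm, mul_smul, smul_add, smul_comm p.1 c, map_smul])

/-- The twisting map `α₂` on `Ṽ`: `α₂(e₁) = e₁`, `α₂ = α` on `V`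
(so in particular `α₂(e₂) = e₂` when `α(e₂) = e₂`). -/
def alpha₂ (α : V →ₗ[K] V) : Vt K V →ₗ[K] Vt K V := LinearMap.prodMap LinearMap.id α

/-- The counit `ε₂` on `Ṽ`: `ε₂(e₁) = 1`, `ε₂ = 0` on `V`. -/
def eps₂ : Vt K V →ₗ[K] K := LinearMap.fst K K V

/-- The multiplication `•` on `Ṽ ⊗ Ṽ` induced by `μ₂`:
`(a⊗b)•(c⊗d) = μ₂(a,c) ⊗ μ₂(b,d)`. -/
noncomputable def bullet (μ : V →ₗ[K] V →ₗ[K] V) :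
    (Vt K V ⊗[K] Vt K V) →ₗ[K] (Vt K V ⊗[K] Vt K V) →ₗ[K] (Vt K V ⊗[K] Vt K V) :=
  TensorProduct.curry
    ((TensorProduct.map (TensorProduct.lift (mu₂ μ)) (TensorProduct.lift (mu₂ μ))).comp
      (TensorProduct.tensorTensorTensorComm K (Vt K V) (Vt K V) (Vt K V) (Vt K V)).toLinearMap)

@[simp] lemma mu₂_e₁_left (μ : V →ₗ[K] V →ₗ[K] V) (u : Vt K V) : mu₂ μ e₁ u = u := by
  show ((1:K) * u.1, (1:K) • u.2 + u.1 • (0:V) + μ 0 u.2) = u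
  simp

@[simp] lemma mu₂_e₁_right (μ : V →ₗ[K] V →ₗ[K] V) (u : Vt K V) : mu₂ μ u e₁ = u := by
  show (u.1 * (1:K), u.1 • (0:V) + (1:K) • u.2 + μ u.2 0) = u
  simp

@[simp] lemma mu₂_iota (μ : V →ₗ[K] V →ₗ[K] V) (x y : V) :
    mu₂ μ (iota x) (iota y) = iota (μ x y) := by
  show ((0:K) * 0, (0:K) • y + (0:K) • x + μ x y) = ((0:K), μ x y)
  simp

@[simp] lemma alpha₂_e₁ (α : V →ₗ[K] V) : alpha₂ α (e₁ : Vt K V) = e₁ := by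
  simp [alpha₂, e₁]

@[simp] lemma alpha₂_iota (α : V →ₗ[K] V) (x : V) : alpha₂ α (iota x : Vt K V) = iota (α x) := by
  simp [alpha₂, iota]

@[simp] lemma eps₂_e₁ : eps₂ (e₁ : Vt K V) = 1 := rfl
@[simp] lemma eps₂_iota (x : V) : eps₂ (iota x : Vt K V) = 0 := rfl

@[simp] lemma bullet_tmul (μ : V →ₗ[K] V →ₗ[K] V) (a b c d : Vt K V) :
    bullet μ (a ⊗ₜ[K] b) (c ⊗ₜ[K] d) = mu₂ μ a c ⊗ₜ[K] mu₂ μ b d := by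
  simp [bullet]

lemma exists_decomp (e₂ : V) (W : Submodule K V)
    (hcompl : IsCompl (Submodule.span K {e₂}) W) (u : Vt K V) :
    ∃ c a : K, ∃ w ∈ W, u = c • (e₁ : Vt K V) + a • iota e₂ + iota w := by
  obtain ⟨c, x⟩ := u
  have hx : x ∈ Submodule.span K {e₂} ⊔ W := by
    rw [hcompl.sup_eq_top]; trivial
  rw [Submodule.mem_sup] at hx
  obtain ⟨y, hy, z, hz, hyz⟩ := hx
  rw [Submodule.mem_span_singleton] at hy
  obtain ⟨a, rfl⟩ := hy
  refine ⟨c, a, z, hz, ?_⟩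
  simp [e₁, iota, Prod.ext_iff, ← hyz]

lemma ext_aux {X : Type*} [AddCommGroup X] [Module K X] (e₂ : V) (W : Submodule K V)
    (hcompl : IsCompl (Submodule.span K {e₂}) W) (F G : Vt K V →ₗ[K] X)
    (h1 : F e₁ = G e₁) (h2 : F (iota e₂) = G (iota e₂))
    (hw : ∀ w ∈ W, F (iota w) = G (iota w)) (u : Vt K V) : F u = G u := by
  obtain ⟨c, a, w, hwW, rfl⟩ := exists_decomp e₂ W hcompl u
  simp [map_add, map_smul, h1, h2, hw w hwW]

set_option maxHeartbeats 1000000 in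
/-- second Kaplansky construction. Let `(V, μ, e₂, α)` be a unital
hom-associative algebra with `α(e₂) = e₂`, and let `W` be a linear complement of
`K·e₂` in `V` stable under `α` and under `μ`. Let `Δ₂ : Ṽ → Ṽ ⊗ Ṽ` be the linear
map determined by `Δ₂(e₁) = e₁⊗e₁`, `Δ₂(e₂) = e₂⊗e₁ + e₁⊗e₂ − e₂⊗e₂` and
`Δ₂(w) = (e₁−e₂)⊗α(w) + α(w)⊗(e₁−e₂)` for `w ∈ W`. With `μ₂`, `η₂(1) = e₁`, `ε₂`
and `α₂` as above, `K₂(A) = (Ṽ, μ₂, η₂, Δ₂, ε₂, α₂)` satisfies: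
(a) comultiplicativity, (b) hom-coassociativity, (c) the hom-counital condition,
(d) `Δ₂` is multiplicative for `μ₂` w.r.t. `•`, (e) `ε₂` is multiplicative, and
(f) `ε₂ ∘ α₂ = ε₂`; i.e. `K₂(A)` is a unital hom-bialgebra. -/
theorem stmt_5 (μ : V →ₗ[K] V →ₗ[K] V) (α : V →ₗ[K] V) (e₂ : V)
    (hmult : ∀ x y : V, α (μ x y) = μ (α x) (α y))
    (hassoc : ∀ x y z : V, μ (α x) (μ y z) = μ (μ x y) (α z))
    (hunitl : ∀ x : V, μ e₂ x = x) (hunitr : ∀ x : V, μ x e₂ = x)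
    (hαe : α e₂ = e₂)
    (W : Submodule K V)
    (hcompl : IsCompl (Submodule.span K {e₂}) W)
    (hαW : ∀ w ∈ W, α w ∈ W)
    (hμW : ∀ w ∈ W, ∀ w' ∈ W, μ w w' ∈ W)
    (Δ₂ : Vt K V →ₗ[K] (Vt K V) ⊗[K] (Vt K V))
    (hΔe₁ : Δ₂ e₁ = (e₁ : Vt K V) ⊗ₜ[K] (e₁ : Vt K V))
    (hΔe₂ : Δ₂ (iota e₂) = (iota e₂ : Vt K V) ⊗ₜ[K] (e₁ : Vt K V)
        + (e₁ : Vt K V) ⊗ₜ[K] (iota e₂) - (iota e₂ : Vt K V) ⊗ₜ[K] (iota e₂))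
    (hΔW : ∀ w ∈ W, Δ₂ (iota w)
        = ((e₁ : Vt K V) - iota e₂) ⊗ₜ[K] (iota (α w))
          + (iota (α w) : Vt K V) ⊗ₜ[K] ((e₁ : Vt K V) - iota e₂)) :
    -- (a) (α₂ ⊗ α₂) ∘ Δ₂ = Δ₂ ∘ α₂
    (∀ u : Vt K V, TensorProduct.map (alpha₂ α) (alpha₂ α) (Δ₂ u) = Δ₂ (alpha₂ α u)) ∧
    -- (b) (α₂ ⊗ Δ₂) ∘ Δ₂ = (Δ₂ ⊗ α₂) ∘ Δ₂
    (∀ u : Vt K V, TensorProduct.map (alpha₂ α) Δ₂ (Δ₂ u)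
        = TensorProduct.assoc K (Vt K V) (Vt K V) (Vt K V)
            (TensorProduct.map Δ₂ (alpha₂ α) (Δ₂ u))) ∧
    -- (c) (ε₂ ⊗ α₂)(Δ₂ u) = (α₂ ⊗ ε₂)(Δ₂ u) = α₂(α₂ u)
    (∀ u : Vt K V, TensorProduct.lid K (Vt K V)
        (TensorProduct.map (eps₂ (K := K) (V := V)) (alpha₂ α) (Δ₂ u))
        = alpha₂ α (alpha₂ α u)) ∧
    (∀ u : Vt K V, TensorProduct.rid K (Vt K V)
        (TensorProduct.map (alpha₂ α) (eps₂ (K := K) (V := V)) (Δ₂ u))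
        = alpha₂ α (alpha₂ α u)) ∧
    -- (d) Δ₂(μ₂(u,v)) = Δ₂(u) • Δ₂(v)
    (∀ u v : Vt K V, Δ₂ (mu₂ μ u v) = bullet μ (Δ₂ u) (Δ₂ v)) ∧
    -- (e) ε₂(μ₂(u,v)) = ε₂(u)·ε₂(v)
    (∀ u v : Vt K V, eps₂ (mu₂ μ u v) = eps₂ u * eps₂ (K := K) (V := V) v) ∧
    -- (f) ε₂ ∘ α₂ = ε₂
    (∀ u : Vt K V, eps₂ (alpha₂ α u) = eps₂ (K := K) (V := V) u) := by
  have hαW2 : ∀ w ∈ W, α (α w) ∈ W := fun w hw => hαW _ (hαW w hw)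
  refine ⟨?_, ?_, ?_, ?_, ?_, ?_, ?_⟩
  · -- (a)
    intro u
    refine ext_aux e₂ W hcompl
      ((TensorProduct.map (alpha₂ α) (alpha₂ α)).comp Δ₂) (Δ₂.comp (alpha₂ α)) ?_ ?_ ?_ u
    · simp [hΔe₁]
    · simp [hΔe₂, hαe]
    · intro w hw
      simp [hΔW w hw, hΔW (α w) (hαW w hw), hαe, tmul_sub, sub_tmul]
  · -- (b)
    intro u
    refine ext_aux (X := (Vt K V) ⊗[K] ((Vt K V) ⊗[K] (Vt K V))) e₂ W hcompl
      ((TensorProduct.map (alpha₂ α) Δ₂).comp Δ₂)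
      ((TensorProduct.assoc K (Vt K V) (Vt K V) (Vt K V)).toLinearMap.comp
        ((TensorProduct.map Δ₂ (alpha₂ α)).comp Δ₂)) ?_ ?_ ?_ u
    · simp [hΔe₁]
    · simp only [LinearMap.comp_apply, LinearEquiv.coe_coe, hΔe₂, map_add, map_sub,
        map_tmul, hΔe₁, alpha₂_e₁, alpha₂_iota, hαe, tmul_add, tmul_sub, add_tmul, sub_tmul,
        assoc_tmul]
      abel
    · intro w hw
      simp only [LinearMap.comp_apply, LinearEquiv.coe_coe, hΔW w hw,
        hΔW (α w) (hαW w hw), map_add, map_sub, map_tmul, hΔe₁, hΔe₂,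
        alpha₂_e₁, alpha₂_iota, hαe, tmul_add, tmul_sub, add_tmul, sub_tmul, assoc_tmul]
      abel
  · -- (c) lid
    intro u
    refine ext_aux e₂ W hcompl
      ((TensorProduct.lid K (Vt K V)).toLinearMap.comp
        ((TensorProduct.map eps₂ (alpha₂ α)).comp Δ₂))
      ((alpha₂ α).comp (alpha₂ α)) ?_ ?_ ?_ u
    · simp [hΔe₁]
    · simp [hΔe₂, hαe]
    · intro w hw
      simp [hΔW w hw, tmul_sub, sub_tmul, map_sub]
  · -- (c) rid
    intro u
    refine ext_aux e₂ W hcompl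
      ((TensorProduct.rid K (Vt K V)).toLinearMap.comp
        ((TensorProduct.map (alpha₂ α) eps₂).comp Δ₂))
      ((alpha₂ α).comp (alpha₂ α)) ?_ ?_ ?_ u
    · simp [hΔe₁]
    · simp [hΔe₂, hαe]
    · intro w hw
      simp [hΔW w hw, tmul_sub, sub_tmul, map_sub]
  · -- (d)
    have hbl : ∀ t : Vt K V ⊗[K] Vt K V, bullet μ ((e₁ : Vt K V) ⊗ₜ[K] e₁) t = t := by
      intro t
      have : bullet μ ((e₁ : Vt K V) ⊗ₜ[K] e₁) = LinearMap.id :=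
        TensorProduct.ext' (by intro a b; simp)
      rw [this]; rfl
    have hbr : ∀ t : Vt K V ⊗[K] Vt K V, bullet μ t ((e₁ : Vt K V) ⊗ₜ[K] e₁) = t := by
      intro t
      have : (bullet μ).flip ((e₁ : Vt K V) ⊗ₜ[K] e₁) = LinearMap.id :=
        TensorProduct.ext' (by intro a b; simp [LinearMap.flip_apply])
      calc bullet μ t ((e₁ : Vt K V) ⊗ₜ[K] e₁)
          = (bullet μ).flip ((e₁ : Vt K V) ⊗ₜ[K] e₁) t := rfl
        _ = t := by rw [this]; rfl
    -- the three generator cases in u, for all v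
    have case1 : ∀ v : Vt K V, Δ₂ (mu₂ μ e₁ v) = bullet μ (Δ₂ e₁) (Δ₂ v) := by
      intro v; simp [hΔe₁, hbl]
    have gen : ∀ x : V, (∀ y : V, μ x y ∈ Submodule.span K {e₂} ⊔ W → True) → True :=
      fun _ _ => trivial
    have caseE2 : ∀ v : Vt K V, Δ₂ (mu₂ μ (iota e₂) v) = bullet μ (Δ₂ (iota e₂)) (Δ₂ v) := by
      intro v
      refine ext_aux e₂ W hcompl (Δ₂.comp (mu₂ μ (iota e₂)))
        ((bullet μ (Δ₂ (iota e₂))).comp Δ₂) ?_ ?_ ?_ v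
      · simp [hΔe₁, hΔe₂, hbr]
      · simp only [LinearMap.comp_apply, mu₂_iota, hunitl, hΔe₂, map_add, map_sub,
          LinearMap.add_apply, LinearMap.sub_apply, bullet_tmul, mu₂_e₁_left, mu₂_e₁_right,
          mu₂_iota, hunitl]
        abel
      · intro w hw
        simp only [LinearMap.comp_apply, mu₂_iota, hunitl, hΔW w hw, hΔe₂,
          tmul_sub, sub_tmul, map_add, map_sub, LinearMap.add_apply, LinearMap.sub_apply,
          bullet_tmul, mu₂_e₁_left, mu₂_e₁_right, mu₂_iota, hunitl, hunitr]
        abel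
    have caseW : ∀ w ∈ W, ∀ v : Vt K V,
        Δ₂ (mu₂ μ (iota w) v) = bullet μ (Δ₂ (iota w)) (Δ₂ v) := by
      intro w hw v
      refine ext_aux e₂ W hcompl (Δ₂.comp (mu₂ μ (iota w)))
        ((bullet μ (Δ₂ (iota w))).comp Δ₂) ?_ ?_ ?_ v
      · simp [hΔe₁, hΔW w hw, tmul_sub, sub_tmul, map_sub, hbr]
      · simp only [LinearMap.comp_apply, mu₂_iota, hunitr, hΔW w hw, hΔe₂,
          tmul_sub, sub_tmul, map_add, map_sub, LinearMap.add_apply, LinearMap.sub_apply,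
          bullet_tmul, mu₂_e₁_left, mu₂_e₁_right, mu₂_iota, hunitl, hunitr]
        abel
      · intro w' hw'
        simp only [LinearMap.comp_apply, mu₂_iota, hΔW w hw, hΔW w' hw',
          hΔW (μ w w') (hμW w hw w' hw'),
          tmul_sub, sub_tmul, map_add, map_sub, LinearMap.add_apply, LinearMap.sub_apply,
          bullet_tmul, mu₂_e₁_left, mu₂_e₁_right, mu₂_iota, hunitl, hunitr, hmult]
        abel
    intro u v
    refine ext_aux e₂ W hcompl (Δ₂.comp ((mu₂ μ).flip v))
      (((bullet μ).flip (Δ₂ v)).comp Δ₂) ?_ ?_ ?_ u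
    · exact case1 v
    · exact caseE2 v
    · intro w hw; exact caseW w hw v
  · -- (e)
    intro u v; rfl
  · -- (f)
    intro u; rfl

end Stmt5
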